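/- arXiv:1608.03957 — 2 statements merged into one kernel-verified Lean document; each statement's English description precedes it below -/
import Mathlib

section
/- Let a be a nonzero integer. The Kronecker symbol κ_a agrees with a Dirichlet character — i.e., there exist an integer q ≥ 1 and a Dirichlet character χ mod q such that (κ_a(n) : ℂ) = χ(n) for all n ≥ 1 — if and only if a ≢ 3 (mod 4). -/
/-- The Kronecker symbol `κ_a(n) = (a | n)` for `n : ℕ`. -/
def kron (a : ℤ) (n : ℕ) : ℤ :=
  if n = 0 then 0
  else (ZMod.χ₈ (a : ZMod 8)) ^ (padicValNat 2 n) * jacobiSym a (n / 2 ^ padicValNat 2 n)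

lemma kron_odd (a : ℤ) {n : ℕ} (hn : Odd n) : kron a n = jacobiSym a n := by
  have h0 : n ≠ 0 := by rintro rfl; simp at hn
  have hv : padicValNat 2 n = 0 := by
    rw [padicValNat.eq_zero_iff]; right; right
    simpa [Nat.two_dvd_ne_zero] using Nat.odd_iff.mp hn
  simp [kron, h0, hv]

lemma kron_one (a : ℤ) : kron a 1 = 1 := by
  rw [kron_odd a odd_one, jacobiSym.one_right]

lemma kron_even_arg {a : ℤ} (ha : 2 ∣ a) {n : ℕ} (hn : 2 ∣ n) : kron a n = 0 := by
  rcases eq_or_ne n 0 with rfl | h0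
  · simp [kron]
  · have hv : 1 ≤ padicValNat 2 n := one_le_padicValNat_of_dvd h0 hn
    have hχ : ZMod.χ₈ ((a : ℤ) : ZMod 8) = 0 := by
      obtain ⟨k, rfl⟩ := ha
      rw [ZMod.χ₈_int_eq_if_mod_eight]
      simp [Int.mul_emod_right]
    simp [kron, h0, hχ, zero_pow (by omega : padicValNat 2 n ≠ 0)]

lemma kron_mul (a : ℤ) (m n : ℕ) : kron a (m * n) = kron a m * kron a n := by
  rcases eq_or_ne m 0 with rfl | hm; · simp [kron]
  rcases eq_or_ne n 0 with rfl | hn; · simp [kron]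
  have hmn : m * n ≠ 0 := Nat.mul_ne_zero hm hn
  have hv : padicValNat 2 (m * n) = padicValNat 2 m + padicValNat 2 n :=
    padicValNat.mul hm hn
  have hd : (m * n) / 2 ^ padicValNat 2 (m * n)
      = (m / 2 ^ padicValNat 2 m) * (n / 2 ^ padicValNat 2 n) := by
    have := Nat.ordCompl_mul m n 2
    simpa [Nat.factorization_def _ Nat.prime_two] using this
  have : NeZero (m / 2 ^ padicValNat 2 m) := ⟨Nat.ordCompl_pos 2 hm |>.ne'⟩
  have : NeZero (n / 2 ^ padicValNat 2 n) := ⟨Nat.ordCompl_pos 2 hn |>.ne'⟩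
  rw [kron, kron, kron, if_neg hmn, if_neg hm, if_neg hn, hd, hv, pow_add,
    jacobiSym.mul_right]
  ring

lemma jac_val_mod (b : ℕ) [NeZero b] (u : ℕ) :
    jacobiSym (u % b : ℕ) b = jacobiSym u b := by
  apply jacobiSym.mod_left'
  push_cast
  rw [Int.emod_emod_of_dvd _ dvd_rfl]

/-- The Jacobi symbol as a Dirichlet character mod `b`. -/
def jchar (b : ℕ) [NeZero b] : DirichletCharacter ℂ b where
  toFun x := ((jacobiSym x.val b : ℤ) : ℂ)
  map_one' := by
    show ((jacobiSym (((1 : ZMod b)).val) b : ℤ) : ℂ) = 1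
    rcases eq_or_ne b 1 with rfl | h
    · simp [jacobiSym.one_right]
    · rw [ZMod.val_one'' h, Nat.cast_one, jacobiSym.one_left]; norm_num
  map_mul' x y := by
    show ((jacobiSym (((x * y : ZMod b)).val) b : ℤ) : ℂ) = _ * _
    have h : (jacobiSym ((x * y).val) b : ℤ) = jacobiSym ((x.val : ℤ) * y.val) b := by
      rw [ZMod.val_mul]
      rw [show ((x.val : ℤ) * y.val) = ((x.val * y.val : ℕ) : ℤ) by push_cast; ring]
      exact jac_val_mod b _
    rw [h, jacobiSym.mul_left]
    push_cast
    ring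
  map_nonunit' x hx := by
    have hxv : ¬ (x.val).Coprime b := by
      rw [← ZMod.isUnit_iff_coprime]
      rwa [ZMod.natCast_rightInverse x]
    have hz : jacobiSym (x.val : ℤ) b = 0 := by
      apply jacobiSym.eq_zero_iff.mpr
      refine ⟨NeZero.ne b, ?_⟩
      rwa [Int.gcd_natCast_natCast]
    show ((jacobiSym ((x.val)) b : ℤ) : ℂ) = 0
    rw [hz]; simp

lemma jchar_apply (b : ℕ) [NeZero b] (n : ℕ) :
    jchar b (n : ZMod b) = ((jacobiSym n b : ℤ) : ℂ) := by
  show ((jacobiSym ((n : ZMod b)).val b : ℤ) : ℂ) = _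
  rw [ZMod.val_natCast, jac_val_mod]

lemma chi8_neg (x : ZMod 8) : ZMod.χ₈ (-x) = ZMod.χ₈ x := by fin_cases x <;> rfl

lemma chi8_eq (a : ℤ) :
    ZMod.χ₈ ((a : ZMod 8)) = ZMod.χ₈ ((a.natAbs : ZMod 8)) := by
  rcases le_or_gt 0 a with hpos | hneg
  · conv_lhs => rw [show a = ((a.natAbs : ℤ)) by omega, Int.cast_natCast]
  · conv_lhs => rw [show a = -((a.natAbs : ℤ)) by omega, Int.cast_neg, Int.cast_natCast]
    rw [chi8_neg]

lemma jac_step_b {a : ℤ} (ha : a % 4 = 1) {m : ℕ} (hm : Odd m) :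
    jacobiSym a m = jacobiSym (m : ℤ) a.natAbs := by
  set b := a.natAbs with hb
  have hbodd : Odd b := by
    rw [Int.natAbs_odd, Int.odd_iff]; omega
  rcases le_or_gt 0 a with hpos | hneg
  · have hab : a = (b : ℤ) := (Int.natAbs_of_nonneg hpos).symm
    have hb4 : b % 4 = 1 := by omega
    rw [hab]
    exact jacobiSym.quadratic_reciprocity_one_mod_four hb4 hm
  · have hab : a = -(b : ℤ) := by omega
    have hb4 : b % 4 = 3 := by omega
    have hsplit : a = (-1) * (b : ℤ) := by rw [hab]; ring
    rw [hsplit, jacobiSym.mul_left, jacobiSym.at_neg_one hm]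
    have hm2 : m % 2 = 1 := Nat.odd_iff.mp hm
    rcases Nat.odd_mod_four_iff.mp hm2 with h1 | h3
    · rw [ZMod.χ₄_nat_eq_if_mod_four]
      rw [jacobiSym.quadratic_reciprocity_one_mod_four' hbodd h1]
      simp [hm2, h1]
    · rw [ZMod.χ₄_nat_eq_if_mod_four]
      rw [jacobiSym.quadratic_reciprocity_three_mod_four hb4 h3]
      simp [hm2, h3]

lemma kron_eq_jac {a : ℤ} (ha : a % 4 = 1) {n : ℕ} (hn : n ≠ 0) :
    kron a n = jacobiSym (n : ℤ) a.natAbs := by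
  have hbodd : Odd a.natAbs := by rw [Int.natAbs_odd, Int.odd_iff]; omega
  set v := padicValNat 2 n with hv
  set m := n / 2 ^ v with hm
  have hmodd : Odd m := by
    rw [Nat.odd_iff, ← Nat.two_dvd_ne_zero]
    have := Nat.not_dvd_ordCompl Nat.prime_two hn
    simpa [Nat.factorization_def _ Nat.prime_two, ← hv, ← hm] using this
  have hnm : n = 2 ^ v * m := by
    have := Nat.ordProj_mul_ordCompl_eq_self n 2
    simp only [Nat.factorization_def _ Nat.prime_two] at this
    rw [hm, hv]
    exact this.symm
  have hcast : ((n : ℕ) : ℤ) = (2 : ℤ) ^ v * (m : ℕ) := by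
    rw [hnm]; push_cast; ring
  rw [kron, if_neg hn, ← hv, ← hm, hcast, jacobiSym.mul_left,
    show ((2 : ℤ) ^ v) = (2 : ℤ) ^ v from rfl, jacobiSym.pow_left,
    jacobiSym.at_two hbodd, jac_step_b ha hmodd, chi8_eq]


lemma kron_period_even {a : ℤ} (ha : 2 ∣ a) {m n : ℕ}
    (h : m % (4 * a.natAbs) = n % (4 * a.natAbs)) : kron a m = kron a n := by
  have h2 : m % 2 = n % 2 := by
    have d2 : (2 : ℕ) ∣ 4 * a.natAbs := ⟨2 * a.natAbs, by ring⟩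
    rw [← Nat.mod_mod_of_dvd m d2, ← Nat.mod_mod_of_dvd n d2, h]
  rcases Nat.even_or_odd m with he | ho
  · have hne : Even n := by rw [Nat.even_iff]; rw [Nat.even_iff] at he; omega
    rw [kron_even_arg ha he.two_dvd, kron_even_arg ha hne.two_dvd]
  · have hno : Odd n := by rw [Nat.odd_iff]; rw [Nat.odd_iff] at ho; omega
    rw [kron_odd a ho, kron_odd a hno, jacobiSym.mod_right a ho,
      jacobiSym.mod_right a hno, h]

/-- The Kronecker symbol of an even `a` as a Dirichlet character mod `4 * a.natAbs`. -/
def kchar (a : ℤ) (ha : 2 ∣ a) (ha0 : a ≠ 0) : DirichletCharacter ℂ (4 * a.natAbs) where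
  toFun x := ((kron a x.val : ℤ) : ℂ)
  map_one' := by
    show ((kron a (1 : ZMod (4 * a.natAbs)).val : ℤ) : ℂ) = 1
    have h1 : (4 * a.natAbs) ≠ 1 := by
      have : a.natAbs ≠ 0 := Int.natAbs_ne_zero.mpr ha0
      omega
    rw [ZMod.val_one'' h1, kron_one]
    norm_num
  map_mul' x y := by
    show ((kron a ((x * y : ZMod (4 * a.natAbs))).val : ℤ) : ℂ) = _ * _
    have : kron a ((x * y).val) = kron a (x.val * y.val) := by
      rw [ZMod.val_mul]
      exact kron_period_even ha (Nat.mod_mod_of_dvd _ dvd_rfl)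
    rw [this, kron_mul]
    push_cast; ring
  map_nonunit' x hx := by
    show ((kron a (x.val) : ℤ) : ℂ) = 0
    haveI : NeZero (4 * a.natAbs) := ⟨by have := Int.natAbs_ne_zero.mpr ha0; omega⟩
    have hxv : ¬ (x.val).Coprime (4 * a.natAbs) := by
      rw [← ZMod.isUnit_iff_coprime]
      rwa [ZMod.natCast_rightInverse x]
    rcases Nat.even_or_odd x.val with he | ho
    · rw [kron_even_arg ha he.two_dvd]; norm_num
    · have h4 : (x.val).Coprime 4 := by
        have : (x.val).Coprime 2 := Nat.coprime_two_right.mpr ho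
        simpa using this.pow_right 2
      have hb : ¬ (x.val).Coprime a.natAbs := by
        intro hcop
        exact hxv ((Nat.coprime_mul_iff_right).mpr ⟨h4, hcop⟩)
      have hz : jacobiSym a x.val = 0 := by
        apply jacobiSym.eq_zero_iff.mpr
        refine ⟨?_, ?_⟩
        · rintro h0; rw [h0] at ho; simp [Nat.odd_iff] at ho
        · rw [Int.gcd]
          simp only [Int.natAbs_natCast]
          rw [Nat.coprime_comm] at hb
          exact hb
      rw [kron_odd a ho, hz]
      norm_num
lemma kchar_apply (a : ℤ) (ha : 2 ∣ a) (ha0 : a ≠ 0) (x : ZMod (4 * a.natAbs)) :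
    kchar a ha ha0 x = ((kron a x.val : ℤ) : ℂ) := rfl

theorem kron_eq_dirichlet_character_iff (a : ℤ) (ha : a ≠ 0) :
    (∃ (q : ℕ), 1 ≤ q ∧ ∃ χ : DirichletCharacter ℂ q,
        ∀ n : ℕ, 1 ≤ n → (kron a n : ℂ) = χ (n : ZMod q)) ↔ ¬ a ≡ 3 [ZMOD 4] := by
  have hb0 : a.natAbs ≠ 0 := Int.natAbs_ne_zero.mpr ha
  constructor
  · rintro ⟨q, hq1, χ, hχ⟩ h3
    have ha4 : a % 4 = 3 := by
      have := h3; simp only [Int.ModEq] at this; omega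
    have ha2 : a % 2 = 1 := by omega
    haveI : NeZero q := ⟨by omega⟩
    -- q must be odd
    have hqodd : q % 2 = 1 := by
      by_contra hq2
      have h2q : (2 : ℕ) ∣ q := by omega
      have hnu : ¬ IsUnit ((2 : ℕ) : ZMod q) := by
        rw [ZMod.isUnit_iff_coprime]
        intro hc
        have := Nat.Coprime.eq_one_of_dvd hc h2q
        omega
      have h0 : χ ((2 : ℕ) : ZMod q) = 0 := χ.map_nonunit hnu
      have hk2 : kron a 2 = ZMod.χ₈ ((a : ZMod 8)) := by
        have : padicValNat 2 2 = 1 := by simp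
        simp [kron, this, jacobiSym.one_right]
      have hne : ZMod.χ₈ ((a : ZMod 8)) ≠ 0 := by
        rw [ZMod.χ₈_int_eq_if_mod_eight]
        have : a % 8 = 3 ∨ a % 8 = 7 := by omega
        rcases this with h | h <;> simp [h, show ¬ a % 2 = 0 by omega]
      have := hχ 2 (by norm_num)
      rw [h0, hk2] at this
      exact hne (by exact_mod_cast this)
    -- the bad odd number
    set b := a.natAbs with hbdef
    have hbodd : b % 2 = 1 := by
      have := Int.natAbs_odd.mpr (Int.odd_iff.mpr ha2)
      exact Nat.odd_iff.mp this
    set m := 1 + 2 * (q * b) with hmdef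
    have hqb : (q * b) % 2 = 1 := Nat.odd_iff.mp (Nat.odd_mul.mpr
      ⟨Nat.odd_iff.mpr hqodd, Nat.odd_iff.mpr hbodd⟩)
    have hm4 : m % 4 = 3 := by omega
    have hmodd : Odd m := by rw [Nat.odd_iff]; omega
    have hmmodb : b ≠ 1 → m % b = 1 := by
      intro hb1
      have : m = 1 + (2 * q) * b := by ring
      rw [this, Nat.add_mul_mod_self_right]
      exact Nat.mod_eq_of_lt (by omega)
    -- J(m | b) = 1
    have hjmb : jacobiSym (m : ℤ) b = 1 := by
      rcases eq_or_ne b 1 with hb1 | hb1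
      · rw [hb1]; exact jacobiSym.one_right _
      · haveI : NeZero b := ⟨hb0⟩
        rw [← jac_val_mod b m, hmmodb hb1, Nat.cast_one, jacobiSym.one_left]
    -- kron a m = -1
    have hkm : kron a m = -1 := by
      rw [kron_odd a hmodd]
      rcases le_or_gt 0 a with hpos | hneg
      · have hab : a = (b : ℤ) := by omega
        have hb4 : b % 4 = 3 := by omega
        rw [hab, jacobiSym.quadratic_reciprocity_three_mod_four hb4 hm4, hjmb]
      · have hab : a = -(b : ℤ) := by omega
        have hb4 : b % 4 = 1 := by omega
        rw [show a = (-1) * (b : ℤ) by omega, jacobiSym.mul_left,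
          jacobiSym.at_neg_one hmodd,
          jacobiSym.quadratic_reciprocity_one_mod_four hb4 hmodd, hjmb,
          ZMod.χ₄_nat_eq_if_mod_four]
        simp [show ¬ m % 2 = 0 by omega, show ¬ m % 4 = 1 by omega]
    -- but χ m = χ 1 = 1
    have hmq : ((m : ℕ) : ZMod q) = 1 := by
      have hm' : (m : ℕ) = 1 + (2 * b) * q := by rw [hmdef]; ring
      rw [hm']
      push_cast [ZMod.natCast_self]
      ring
    have h1 := hχ m (by omega)
    rw [hmq, hkm] at h1
    rw [map_one] at h1
    norm_num at h1
  · intro h3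
    have ha4 : a % 4 ≠ 3 := by
      intro h; exact h3 (by simp only [Int.ModEq]; omega)
    rcases Int.even_or_odd a with heven | hodd
    · -- even case
      have h2a : 2 ∣ a := heven.two_dvd
      refine ⟨4 * a.natAbs, by omega, kchar a h2a ha, fun n hn => ?_⟩
      rw [kchar_apply, ZMod.val_natCast]
      have : kron a (n % (4 * a.natAbs)) = kron a n :=
        kron_period_even h2a (Nat.mod_mod_of_dvd _ dvd_rfl)
      rw [this]
    · -- odd case: a % 4 = 1
      have ha1 : a % 4 = 1 := by
        rw [Int.odd_iff] at hodd; omega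
      haveI : NeZero a.natAbs := ⟨hb0⟩
      refine ⟨a.natAbs, by omega, jchar a.natAbs, fun n hn => ?_⟩
      rw [jchar_apply, kron_eq_jac ha1 (by omega)]
end

section
/- Let a be an integer with a ≡ 3 (mod 4), let F₄ be the field with four elements (GaloisField 2 2), and let f : ℤ → F₄ be a function whose values f(−1), f(0), f(1) are pairwise distinct. Let G be the element of the Laurent series field LaurentSeries F₄ given by the power series ∑_{n ≥ 0} f(κ_a(n)) X^n. Then G is algebraic over the field of rational functions RatFunc F₄ (embedded in LaurentSeries F₄ via the canonical algebra map), and the natural degree of the minimal polynomial of G over RatFunc F₄ is either 2 or 4. -/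
open Polynomial PowerSeries

section KronBasics

variable {a : ℤ}

lemma chi8_pm (h : a % 4 = 3) : ZMod.χ₈ (a : ZMod 8) = 1 ∨ ZMod.χ₈ (a : ZMod 8) = -1 := by
  have := ZMod.χ₈_int_eq_if_mod_eight a
  rw [this]
  split_ifs with h1 h2
  · omega
  · left; rfl
  · right; rfl

lemma kron_two_pow_mul (a : ℤ) (k : ℕ) {m : ℕ} (hm : Odd m) :
    kron a (2 ^ k * m) = (ZMod.χ₈ (a : ZMod 8)) ^ k * jacobiSym a m := by
  have hm0 : m ≠ 0 := by rintro rfl; simp [Nat.odd_iff] at hm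
  have hn0 : 2 ^ k * m ≠ 0 := by positivity
  have hv : padicValNat 2 (2 ^ k * m) = k := by
    rw [padicValNat.mul (by positivity) hm0, padicValNat.prime_pow,
      padicValNat.eq_zero_of_not_dvd (by rw [Nat.odd_iff] at hm; omega), add_zero]
  rw [kron, if_neg hn0, hv, Nat.mul_div_cancel_left _ (pow_pos (by norm_num) k)]

lemma kron_four_mul (h : a % 4 = 3) (n : ℕ) : kron a (4 * n) = kron a n := by
  rcases eq_or_ne n 0 with rfl | hn0
  · simp
  have hε2 : (ZMod.χ₈ (a : ZMod 8)) ^ 2 = 1 := by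
    rcases chi8_pm h with h1 | h1 <;> rw [h1] <;> ring
  set v := padicValNat 2 n with hv
  set m := n / 2 ^ v with hm
  have hdvd : 2 ^ v ∣ n := pow_padicValNat_dvd
  have hn : 2 ^ v * m = n := Nat.mul_div_cancel' hdvd
  have hmodd : Odd m := by
    rw [Nat.odd_iff]
    by_contra hodd
    have h2 : (2 : ℕ) ∣ m := by omega
    have : 2 ^ (v + 1) ∣ n := by
      obtain ⟨c, hc⟩ := h2
      exact ⟨c, by rw [← hn, hc]; ring⟩
    exact pow_succ_padicValNat_not_dvd hn0 this
  have h4 : 4 * n = 2 ^ (v + 2) * m := by rw [← hn]; ring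
  rw [h4, kron_two_pow_mul a _ hmodd, ← hn, kron_two_pow_mul a _ hmodd,
    pow_add, hε2, mul_one]

lemma kron_mem (a : ℤ) (n : ℕ) : kron a n = 0 ∨ kron a n = 1 ∨ kron a n = -1 := by
  rw [kron]
  split_ifs with h0
  · left; rfl
  have h1 : (ZMod.χ₈ (a : ZMod 8)) ^ (padicValNat 2 n) = 0 ∨
      (ZMod.χ₈ (a : ZMod 8)) ^ (padicValNat 2 n) = 1 ∨
      (ZMod.χ₈ (a : ZMod 8)) ^ (padicValNat 2 n) = -1 := by
    rcases ZMod.isQuadratic_χ₈ (a : ZMod 8) with h2 | h2 | h2 <;> rw [h2]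
    · rcases Nat.eq_zero_or_pos (padicValNat 2 n) with h3 | h3
      · rw [h3, pow_zero]; tauto
      · rw [zero_pow (by omega)]; tauto
    · rw [one_pow]; tauto
    · rcases Nat.even_or_odd (padicValNat 2 n) with h3 | h3
      · rw [h3.neg_one_pow]; tauto
      · rw [h3.neg_one_pow]; tauto
  rcases h1 with h1 | h1 | h1 <;> rw [h1] <;>
    rcases jacobiSym.trichotomy a (n / 2 ^ padicValNat 2 n) with h2 | h2 | h2 <;>
      rw [h2] <;> norm_num

lemma jacobi_eq_neg_one (h : a % 4 = 3) {m : ℕ} (hm4 : m % 4 = 3)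
    (hma : (m : ℤ) % a.natAbs = 1 % a.natAbs) : jacobiSym a m = -1 := by
  have hmodd : Odd m := Nat.odd_iff.mpr (by omega)
  have hJ1 : jacobiSym (m : ℤ) a.natAbs = 1 := by
    rw [jacobiSym.mod_left' hma, jacobiSym.one_left]
  rcases lt_or_ge a 0 with ha | ha
  · have hb : (a.natAbs : ℤ) = -a := by omega
    have hb4 : a.natAbs % 4 = 1 := by omega
    have ha' : a = -1 * (a.natAbs : ℤ) := by omega
    rw [ha', jacobiSym.mul_left, jacobiSym.at_neg_one hmodd,
      ZMod.χ₄_nat_three_mod_four hm4,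
      jacobiSym.quadratic_reciprocity_one_mod_four hb4 hmodd, hJ1]
    ring
  · have hb : (a.natAbs : ℤ) = a := by omega
    have hb4 : a.natAbs % 4 = 3 := by omega
    rw [← hb, jacobiSym.quadratic_reciprocity_three_mod_four hb4 hm4, hJ1]


lemma kron_period (h : a % 4 = 3) {n : ℕ} (hn : ¬ (4 ∣ n)) :
    kron a (n + 8 * a.natAbs) = kron a n := by
  have hA : a.natAbs % 2 = 1 := by omega
  rcases Nat.even_or_odd n with he | ho
  · -- n ≡ 2 mod 4 : n = 2 * m with m odd
    obtain ⟨m, hm⟩ : 2 ∣ n := he.two_dvd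
    have hmodd : Odd m := by rw [Nat.odd_iff]; omega
    have hmodd' : Odd (m + 4 * a.natAbs) := by rw [Nat.odd_iff]; rw [Nat.odd_iff] at hmodd; omega
    have e1 : n + 8 * a.natAbs = 2 ^ 1 * (m + 4 * a.natAbs) := by omega
    have e2 : n = 2 ^ 1 * m := by omega
    rw [e1, e2, kron_two_pow_mul a 1 hmodd', kron_two_pow_mul a 1 hmodd]
    congr 1
    rw [jacobiSym.mod_right a hmodd', jacobiSym.mod_right a hmodd,
      Nat.add_mod_right]
  · have hoodd' : Odd (n + 8 * a.natAbs) := by rw [Nat.odd_iff] at ho ⊢; omega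
    have k0 : ∀ x : ℕ, Odd x → kron a x = jacobiSym a x := by
      intro x hx
      rw [show x = 2 ^ 0 * x by ring, kron_two_pow_mul a 0 hx]
      simp
    rw [k0 _ hoodd', k0 _ ho]
    rw [jacobiSym.mod_right a hoodd', jacobiSym.mod_right a ho]
    congr 1
    have e8 : n + 8 * a.natAbs = n + 4 * a.natAbs * 2 := by ring
    rw [e8, Nat.add_mul_mod_self_left]

lemma kron_not_eventually_periodic (h : a % 4 = 3) {N P : ℕ} (hP : 0 < P)
    (hper : ∀ n, N ≤ n → kron a (n + P) = kron a n) : False := by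
  have hA0 : a.natAbs ≠ 0 := by omega
  have hA : a.natAbs % 2 = 1 := by omega
  -- iterate 4-multiplication
  have h4k : ∀ k n, kron a (4 ^ k * n) = kron a n := by
    intro k
    induction k with
    | zero => intro n; rw [pow_zero, one_mul]
    | succ k ih =>
      intro n
      have : 4 ^ (k + 1) * n = 4 * (4 ^ k * n) := by ring
      rw [this, kron_four_mul h, ih]
  -- iterate the period
  have hiter : ∀ t n, N ≤ n → kron a (n + t * P) = kron a n := by
    intro t
    induction t with
    | zero => intro n _; simp
    | succ t ih =>
      intro n hn
      have e : n + (t + 1) * P = (n + t * P) + P := by ring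
      rw [e, hper _ (by omega), ih n hn]
  -- full periodicity from n = 1 on
  have hfull : ∀ n, 1 ≤ n → kron a (n + P) = kron a n := by
    intro n hn
    have hNle : N ≤ 4 ^ N * n := by
      calc N ≤ 4 ^ N := le_of_lt (Nat.lt_pow_self (by norm_num))
      _ ≤ 4 ^ N * n := Nat.le_mul_of_pos_right _ hn
    calc kron a (n + P) = kron a (4 ^ N * (n + P)) := (h4k _ _).symm
      _ = kron a (4 ^ N * n + 4 ^ N * P) := by rw [mul_add]
      _ = kron a (4 ^ N * n) := hiter _ _ hNle
      _ = kron a n := h4k _ _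
  -- extended full periodicity
  have hfullt : ∀ t n, 1 ≤ n → kron a (n + t * P) = kron a n := by
    intro t
    induction t with
    | zero => intro n _; simp
    | succ t ih =>
      intro n hn
      have e : n + (t + 1) * P = (n + t * P) + P := by ring
      rw [e, hfull _ (by omega), ih n hn]
  -- the big period P' = 2^2 * (A * P)
  set A := a.natAbs with hAdef
  set P' : ℕ := 2 ^ 2 * (A * P) with hP'def
  have hP'0 : P' ≠ 0 := by positivity
  set e := padicValNat 2 P' with he
  set q := P' / 2 ^ e with hq
  have hdvd : 2 ^ e ∣ P' := pow_padicValNat_dvd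
  have hP'eq : 2 ^ e * q = P' := Nat.mul_div_cancel' hdvd
  have hqodd : Odd q := by
    rw [Nat.odd_iff]
    by_contra hodd
    have h2 : (2:ℕ) ∣ q := by omega
    obtain ⟨c, hc⟩ := h2
    have hdd : 2 ^ (e + 1) ∣ P' := ⟨c, by rw [← hP'eq, hc]; ring⟩
    exact pow_succ_padicValNat_not_dvd hP'0 hdd
  have he2 : 2 ≤ e := by
    have : padicValNat 2 P' = 2 + padicValNat 2 (A * P) := by
      rw [hP'def, padicValNat.mul (by positivity) (by positivity), padicValNat.prime_pow]
    omega
  have hAq : A ∣ q := by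
    have h1 : A ∣ 2 ^ e * q := ⟨4 * P, by rw [hP'eq, hP'def]; ring⟩
    have hcop : Nat.Coprime A (2 ^ e) := by
      apply Nat.Coprime.pow_right
      rw [Nat.coprime_comm, Nat.Prime.coprime_iff_not_dvd Nat.prime_two]; omega
    exact hcop.dvd_of_dvd_mul_left h1
  -- evaluate at n1 = 2^(e-1)
  have hsplit : 2 ^ (e - 1) + P' = 2 ^ (e - 1) * (1 + 2 * q) := by
    have : (2:ℕ) ^ e = 2 ^ (e - 1) * 2 := by
      rw [← pow_succ]; congr 1; omega
    rw [← hP'eq, this]; ring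
  have hper1 : kron a (2 ^ (e - 1) + P') = kron a (2 ^ (e - 1)) := by
    have : P' = (4 * A) * P := by rw [hP'def]; ring
    rw [this]
    exact hfullt (4 * A) _ (Nat.one_le_two_pow)
  have hJ : jacobiSym a (1 + 2 * q) = -1 := by
    apply jacobi_eq_neg_one h
    · rw [Nat.odd_iff] at hqodd; omega
    · obtain ⟨c, hc⟩ := hAq
      have : ((1 + 2 * q : ℕ) : ℤ) = 1 + (A : ℤ) * (2 * c) := by push_cast [hc]; ring
      rw [this, Int.add_mul_emod_self_left]
  have hodd1 : Odd (1 + 2 * q) := by rw [Nat.odd_iff]; omega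
  have hv1 : kron a (2 ^ (e - 1)) = (ZMod.χ₈ (a : ZMod 8)) ^ (e - 1) := by
    have : (2:ℕ) ^ (e - 1) = 2 ^ (e - 1) * 1 := by ring
    rw [this, kron_two_pow_mul a _ (by decide), jacobiSym.one_right, mul_one]
  have hv2 : kron a (2 ^ (e - 1) + P') = (ZMod.χ₈ (a : ZMod 8)) ^ (e - 1) * (-1) := by
    rw [hsplit, kron_two_pow_mul a _ hodd1, hJ]
  rw [hv2, hv1] at hper1
  rcases chi8_pm h with h1 | h1 <;> rw [h1] at hper1
  · simp at hper1
  · rcases Nat.even_or_odd (e - 1) with h2 | h2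
    · rw [h2.neg_one_pow] at hper1; simp at hper1
    · rw [h2.neg_one_pow] at hper1; norm_num at hper1

end KronBasics

section Series

abbrev F4 := GaloisField 2 2

noncomputable instance : Fintype F4 := Fintype.ofFinite _

lemma F4_card : Fintype.card F4 = 4 := by
  have := GaloisField.card 2 2 (by norm_num)
  rwa [Nat.card_eq_fintype_card] at this

lemma F4_pow_four (x : F4) : x ^ 4 = x := by
  have := FiniteField.pow_card x
  rwa [F4_card] at this

lemma F4_add_self (x : F4) : x + x = 0 :=
  CharTwo.add_self_eq_zero x

lemma mk_sq (u : ℕ → F4) :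
    (PowerSeries.mk u) ^ 2
      = PowerSeries.mk (fun n => if 2 ∣ n then u (n / 2) ^ 2 else 0) := by
  ext n
  rw [pow_two, PowerSeries.coeff_mul, PowerSeries.coeff_mk,
    Finset.Nat.sum_antidiagonal_eq_sum_range_succ_mk]
  simp only [PowerSeries.coeff_mk]
  rcases Nat.even_or_odd n with he | ho
  · obtain ⟨m, hm⟩ := he
    have hmem : m ∈ Finset.range (n + 1) := Finset.mem_range.mpr (by omega)
    rw [← Finset.add_sum_erase _ _ hmem]
    have hzero : ∑ i ∈ (Finset.range (n + 1)).erase m, u i * u (n - i) = 0 := by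
      apply Finset.sum_involution (fun i _ => n - i)
      · intro i hi
        have hi' : i ≤ n := by
          have := Finset.mem_range.mp (Finset.mem_erase.mp hi).2; omega
        have : n - (n - i) = i := by omega
        rw [this, mul_comm]
        exact F4_add_self _
      · intro i hi _
        have h1 : i ≠ m := (Finset.mem_erase.mp hi).1
        have h2 : i ≤ n := by
          have := Finset.mem_range.mp (Finset.mem_erase.mp hi).2; omega
        omega
      · intro i hi
        have h1 : i ≠ m := (Finset.mem_erase.mp hi).1
        have h2 : i ≤ n := by
          have := Finset.mem_range.mp (Finset.mem_erase.mp hi).2; omega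
        exact Finset.mem_erase.mpr ⟨by omega, Finset.mem_range.mpr (by omega)⟩
      · intro i hi
        have h2 : i ≤ n := by
          have := Finset.mem_range.mp (Finset.mem_erase.mp hi).2; omega
        omega
    rw [hzero, add_zero, if_pos (by omega : 2 ∣ n)]
    have h1 : n - m = m := by omega
    have h2 : n / 2 = m := by omega
    rw [h1, h2, pow_two]
  · rw [if_neg (by rw [Nat.odd_iff] at ho; omega)]
    apply Finset.sum_involution (fun i _ => n - i)
    · intro i hi
      have hi' : i ≤ n := by have := Finset.mem_range.mp hi; omega
      have : n - (n - i) = i := by omega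
      rw [this, mul_comm]
      exact F4_add_self _
    · intro i hi _
      have h2 : i ≤ n := by have := Finset.mem_range.mp hi; omega
      rw [Nat.odd_iff] at ho; omega
    · intro i hi
      have h2 : i ≤ n := by have := Finset.mem_range.mp hi; omega
      exact Finset.mem_range.mpr (by omega)
    · intro i hi
      have h2 : i ≤ n := by have := Finset.mem_range.mp hi; omega
      omega

lemma mk_pow_four (u : ℕ → F4) :
    (PowerSeries.mk u) ^ 4
      = PowerSeries.mk (fun n => if 4 ∣ n then u (n / 4) else 0) := by
  have h44 : (PowerSeries.mk u) ^ 4 = ((PowerSeries.mk u) ^ 2) ^ 2 := by ring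
  rw [h44, mk_sq, mk_sq]
  ext n
  rw [PowerSeries.coeff_mk, PowerSeries.coeff_mk]
  by_cases h4 : 4 ∣ n
  · rw [if_pos h4, if_pos (by omega : 2 ∣ n), if_pos (by omega : 2 ∣ n / 2)]
    rw [Nat.div_div_eq_div_mul]
    norm_num
    rw [← pow_mul]
    norm_num [F4_pow_four]
  · by_cases h2 : 2 ∣ n
    · rw [if_pos h2, if_neg (by omega : ¬ 2 ∣ n / 2), if_neg h4]
      rw [zero_pow (by norm_num)]
    · rw [if_neg h2, if_neg h4]

lemma periodic_rational (c : ℕ → F4) (P : ℕ) (hP : 0 < P)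
    (hc : ∀ n, c (n + P) = c n) :
    ∃ r : RatFunc F4, (r : LaurentSeries F4)
      = ((PowerSeries.mk c : PowerSeries F4) : LaurentSeries F4) := by
  set S : PowerSeries F4 := PowerSeries.mk c with hS
  set p : Polynomial F4 := PowerSeries.trunc P S with hp
  set Q : Polynomial F4 := 1 - Polynomial.X ^ P with hQdef
  have hQcoe : (Q : PowerSeries F4) = 1 - PowerSeries.X ^ P := by
    push_cast [hQdef]
    norm_cast
  have key : (Q : PowerSeries F4) * S = (p : PowerSeries F4) := by
    rw [hQcoe]
    ext n
    rw [sub_mul, one_mul, map_sub, PowerSeries.coeff_X_pow_mul' S P n]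
    rw [Polynomial.coeff_coe, hp, PowerSeries.coeff_trunc]
    by_cases hn : P ≤ n
    · rw [if_pos hn, if_neg (by omega)]
      have : coeff (n - P) S = coeff n S := by
        have h2 : n - P + P = n := by omega
        conv_rhs => rw [← h2]
        rw [hS, PowerSeries.coeff_mk, PowerSeries.coeff_mk, hc]
      rw [this, sub_self]
    · rw [if_neg hn, if_pos (by omega), sub_zero]
  have hQ0 : Q ≠ 0 := by
    intro hQ
    have : Q.coeff 0 = 1 := by
      rw [hQdef, Polynomial.coeff_sub, Polynomial.coeff_one, Polynomial.coeff_X_pow]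
      rw [if_pos rfl, if_neg (by omega : ¬ (0 = P)), sub_zero]
    rw [hQ] at this
    simp at this
  -- move to Laurent series
  have hQL : ((Q : PowerSeries F4) : LaurentSeries F4) ≠ 0 := by
    intro hzero
    apply hQ0
    have h1 : (Q : PowerSeries F4) = 0 := by
      apply HahnSeries.ofPowerSeries_injective (Γ := ℤ)
      rw [← LaurentSeries.coe_algebraMap] at hzero ⊢
      simpa using hzero
    exact_mod_cast Polynomial.coe_eq_zero_iff.mp h1
  refine ⟨algebraMap (Polynomial F4) (RatFunc F4) p / algebraMap _ _ Q, ?_⟩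
  rw [map_div₀]
  have hcoe : ∀ q : Polynomial F4,
      ((algebraMap (Polynomial F4) (RatFunc F4) q : RatFunc F4) : LaurentSeries F4)
        = ((q : PowerSeries F4) : LaurentSeries F4) := by
    intro q
    exact (RatFunc.coe_coe q).symm
  rw [hcoe, hcoe]
  rw [eq_comm, eq_div_iff hQL]
  rw [← PowerSeries.coe_mul, mul_comm S, key]

lemma rational_eventually_periodic (u : ℕ → F4) (r : RatFunc F4)
    (hr : (r : LaurentSeries F4) = ((PowerSeries.mk u : PowerSeries F4) : LaurentSeries F4)) :
    ∃ N P, 0 < P ∧ ∀ n, N ≤ n → u (n + P) = u n := by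
  classical
  set S : PowerSeries F4 := PowerSeries.mk u with hS
  set q : Polynomial F4 := r.denom with hq
  set p : Polynomial F4 := r.num with hp
  have hq0 : q ≠ 0 := r.denom_ne_zero
  -- power series identity
  have hps : (p : PowerSeries F4) = (q : PowerSeries F4) * S := by
    have h1 : algebraMap (Polynomial F4) (RatFunc F4) p
        = r * algebraMap (Polynomial F4) (RatFunc F4) q :=
      (div_eq_iff (RatFunc.algebraMap_ne_zero hq0)).mp (RatFunc.num_div_denom r)
    have h2 : ((algebraMap (Polynomial F4) (RatFunc F4) p : RatFunc F4) : LaurentSeries F4)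
        = ((algebraMap (Polynomial F4) (RatFunc F4) q : RatFunc F4) : LaurentSeries F4)
          * ((S : PowerSeries F4) : LaurentSeries F4) := by
      rw [h1, map_mul, hr, mul_comm]
    have hc : ∀ P : Polynomial F4,
        ((algebraMap (Polynomial F4) (RatFunc F4) P : RatFunc F4) : LaurentSeries F4)
          = ((P : PowerSeries F4) : LaurentSeries F4) := fun P => (RatFunc.coe_coe P).symm
    rw [hc p, hc q] at h2
    apply HahnSeries.ofPowerSeries_injective (Γ := ℤ)
    rw [map_mul]
    exact h2
  set d : ℕ := q.natDegree with hd
  set t : ℕ := q.natTrailingDegree with ht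
  set w : ℕ := d - t with hw
  have htd : t ≤ d := q.natTrailingDegree_le_natDegree
  have htc : q.coeff t ≠ 0 := by
    rw [ht, ← Polynomial.trailingCoeff]
    exact Polynomial.trailingCoeff_nonzero_iff_nonzero.mpr hq0
  set N0 : ℕ := p.natDegree + 1 with hN0
  -- the linear recurrence
  have hsum : ∀ n, N0 ≤ n → d ≤ n →
      ∑ i ∈ Finset.Icc t d, q.coeff i * u (n - i) = 0 := by
    intro n hn1 hn2
    have hcoeff : (PowerSeries.coeff n) (p : PowerSeries F4) = 0 := by
      rw [Polynomial.coeff_coe]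
      exact Polynomial.coeff_eq_zero_of_natDegree_lt (by omega)
    rw [hps, PowerSeries.coeff_mul, Finset.Nat.sum_antidiagonal_eq_sum_range_succ_mk] at hcoeff
    simp only [Polynomial.coeff_coe, hS, PowerSeries.coeff_mk] at hcoeff
    rw [← hcoeff]
    apply Finset.sum_subset
    · intro i hi
      rw [Finset.mem_Icc] at hi
      rw [Finset.mem_range]
      omega
    · intro i hi hni
      rw [Finset.mem_range] at hi
      rw [Finset.mem_Icc] at hni
      have : q.coeff i = 0 := by
        rcases Nat.lt_or_ge i t with h | h
        · exact Polynomial.coeff_eq_zero_of_lt_natTrailingDegree h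
        · exact Polynomial.coeff_eq_zero_of_natDegree_lt (by omega)
      rw [this, zero_mul]
  -- deterministic propagation
  have hstep : ∀ n1 n2, N0 ≤ n1 → N0 ≤ n2 →
      (∀ i, i < w → u (n1 + i) = u (n2 + i)) → ∀ j, u (n1 + j) = u (n2 + j) := by
    intro n1 n2 h1 h2 hwin j
    induction j using Nat.strong_induction_on with
    | _ j ih =>
      by_cases hj : j < w
      · exact hwin j hj
      · have hw1 : w ≤ j := by omega
        have hkey : ∀ nb, N0 ≤ nb →
            ∑ i ∈ Finset.Icc t d, q.coeff i * u (nb + (j - w) + d - i) = 0 := by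
          intro nb hnb
          exact hsum (nb + (j - w) + d) (by omega) (by omega)
        have e1 := hkey n1 h1
        have e2 := hkey n2 h2
        have htmem : t ∈ Finset.Icc t d := Finset.mem_Icc.mpr ⟨le_refl t, htd⟩
        rw [← Finset.add_sum_erase _ _ htmem] at e1 e2
        have hrest : ∑ i ∈ (Finset.Icc t d).erase t, q.coeff i * u (n1 + (j - w) + d - i)
            = ∑ i ∈ (Finset.Icc t d).erase t, q.coeff i * u (n2 + (j - w) + d - i) := by
          apply Finset.sum_congr rfl
          intro i hi
          have hi1 : i ≠ t := (Finset.mem_erase.mp hi).1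
          have hi2 := Finset.mem_Icc.mp (Finset.mem_erase.mp hi).2
          have hoff : n1 + (j - w) + d - i = n1 + ((j - w) + (d - i)) := by omega
          have hoff2 : n2 + (j - w) + d - i = n2 + ((j - w) + (d - i)) := by omega
          rw [hoff, hoff2, ih ((j - w) + (d - i)) (by omega)]
        have hargs1 : n1 + (j - w) + d - t = n1 + j := by omega
        have hargs2 : n2 + (j - w) + d - t = n2 + j := by omega
        rw [hargs1] at e1
        rw [hargs2] at e2
        have ha := eq_neg_of_add_eq_zero_left e1
        have hb := eq_neg_of_add_eq_zero_left e2
        rw [hrest, ← hb] at ha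
        exact mul_left_cancel₀ htc ha
  -- pigeonhole
  have hconc : ∀ ka kb, ka < kb →
      ((fun i : Fin w => u (N0 + ka + i)) = fun i : Fin w => u (N0 + kb + i)) →
      ∃ N P, 0 < P ∧ ∀ n, N ≤ n → u (n + P) = u n := by
    intro ka kb hab heq
    set n1 := N0 + ka with hn1
    set P := kb - ka with hP
    have hwin : ∀ i, i < w → u (n1 + i) = u (n1 + P + i) := by
      intro i hi
      have h3 : n1 + P + i = N0 + kb + i := by omega
      rw [h3]
      exact congrFun heq ⟨i, hi⟩
    have hall := hstep n1 (n1 + P) (by omega) (by omega) hwin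
    refine ⟨n1, P, by omega, ?_⟩
    intro n hn
    have hthis := hall (n - n1)
    have e1 : n1 + (n - n1) = n := by omega
    have e2 : n1 + P + (n - n1) = n + P := by omega
    rw [e1, e2] at hthis
    exact hthis.symm
  obtain ⟨k1, k2, hkne, hkeq⟩ := Finite.exists_ne_map_eq_of_infinite
    (fun k : ℕ => (fun i : Fin w => u (N0 + k + i)))
  rcases Ne.lt_or_gt hkne with hlt | hlt
  · exact hconc k1 k2 hlt hkeq
  · exact hconc k2 k1 hlt hkeq.symm

end Series

open scoped RatFunc

theorem kron_generating_series_algebraic_degree_two_or_four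
    (a : ℤ) (h : a ≡ 3 [ZMOD 4]) (f : ℤ → GaloisField 2 2)
    (hf : f (-1) ≠ f 0 ∧ f (-1) ≠ f 1 ∧ f 0 ≠ f 1)
    (G : LaurentSeries (GaloisField 2 2))
    (hG : G = (PowerSeries.mk (fun n => f (kron a n)) : PowerSeries (GaloisField 2 2))) :
    IsAlgebraic (RatFunc (GaloisField 2 2)) G ∧
      ((minpoly (RatFunc (GaloisField 2 2)) G).natDegree = 2 ∨
        (minpoly (RatFunc (GaloisField 2 2)) G).natDegree = 4) := by
  classical
  have ha : a % 4 = 3 := by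
    have h' : a % 4 = 3 % 4 := h
    omega
  haveI : CharP (LaurentSeries F4) 2 :=
    charP_of_injective_ringHom (algebraMap F4 (LaurentSeries F4)).injective 2
  set u : ℕ → F4 := fun n => f (kron a n) with hu
  set S : PowerSeries F4 := PowerSeries.mk u with hS
  have hGS : G = ((S : PowerSeries F4) : LaurentSeries F4) := hG
  -- the coefficientwise fact u (4n) = u n
  have h4u : ∀ n, u (4 * n) = u n := fun n => by rw [hu]; simp only; rw [kron_four_mul ha]
  -- S^4 + S = mk c  with c supported away from multiples of 4
  set c : ℕ → F4 := fun n => if 4 ∣ n then 0 else u n with hc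
  have hSc : S ^ 4 + S = PowerSeries.mk c := by
    rw [hS, mk_pow_four]
    ext n
    rw [map_add, PowerSeries.coeff_mk, PowerSeries.coeff_mk, PowerSeries.coeff_mk]
    simp only [hc]
    by_cases h4 : 4 ∣ n
    · rw [if_pos h4, if_pos h4]
      obtain ⟨m, rfl⟩ := h4
      rw [Nat.mul_div_cancel_left _ (by norm_num), ← h4u m]
      exact CharTwo.add_self_eq_zero _
    · rw [if_neg h4, if_neg h4, zero_add]
  -- c is periodic
  have hA0 : a.natAbs ≠ 0 := by omega
  have hcper : ∀ n, c (n + 8 * a.natAbs) = c n := by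
    intro n
    simp only [hc]
    have h48 : (4:ℕ) ∣ 8 * a.natAbs := ⟨2 * a.natAbs, by ring⟩
    by_cases h4 : 4 ∣ n
    · rw [if_pos (by omega), if_pos h4]
    · rw [if_neg (by omega), if_neg h4]
      simp only [hu]
      rw [kron_period ha h4]
  obtain ⟨T, hT⟩ := periodic_rational c (8 * a.natAbs) (by omega) hcper
  -- hence G^4 + G is rational
  have hpow4 : ((S ^ 4 + S : PowerSeries F4) : (LaurentSeries F4)) = G ^ 4 + G := by
    have e : S ^ 4 + S = S * (S * (S * S)) + S := by ring
    rw [e, PowerSeries.coe_add, PowerSeries.coe_mul, PowerSeries.coe_mul, PowerSeries.coe_mul,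
      hGS]
    ring
  have hTG : algebraMap (RatFunc F4) (LaurentSeries F4) T = G ^ 4 + G := by
    have h1 : algebraMap (RatFunc F4) (LaurentSeries F4) T = (T : (LaurentSeries F4)) := rfl
    rw [h1, hT, ← hSc, hpow4]
  -- G is not rational
  have hfinj : ∀ x y : ℤ, (x = 0 ∨ x = 1 ∨ x = -1) → (y = 0 ∨ y = 1 ∨ y = -1) →
      f x = f y → x = y := by
    obtain ⟨h1, h2, h3⟩ := hf
    rintro x y (rfl | rfl | rfl) (rfl | rfl | rfl) hxy <;> simp_all
  have hGnot : ∀ r : (RatFunc F4), algebraMap (RatFunc F4) (LaurentSeries F4) r ≠ G := by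
    intro r hr
    have hr' : (r : (LaurentSeries F4)) = ((S : PowerSeries F4) : (LaurentSeries F4)) := by
      rw [← hGS]; exact hr
    obtain ⟨N, P, hP, hper⟩ := rational_eventually_periodic u r hr'
    apply kron_not_eventually_periodic ha hP (N := N)
    intro n hn
    exact hfinj _ _ (kron_mem a (n + P)) (kron_mem a n) (hper n hn)
  -- the quartic polynomial
  set Q : Polynomial (RatFunc F4) := Polynomial.X ^ 4 + (Polynomial.X + Polynomial.C T) with hQdef
  have hdeg1 : (Polynomial.X + Polynomial.C T : Polynomial (RatFunc F4)).degree ≤ 1 := by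
    refine le_trans (Polynomial.degree_add_le _ _) ?_
    rw [Polynomial.degree_X]
    simp [Polynomial.degree_C_le]
    exact le_trans Polynomial.degree_C_le (by norm_num)
  have hQmonic : Q.Monic := by
    apply Polynomial.monic_X_pow_add
    exact lt_of_le_of_lt hdeg1 (by norm_num)
  have hQ0 : Q ≠ 0 := hQmonic.ne_zero
  have hQdeg : Q.degree = 4 := by
    rw [hQdef, Polynomial.degree_add_eq_left_of_degree_lt
      (by rw [Polynomial.degree_X_pow]; exact lt_of_le_of_lt hdeg1 (by norm_num)),
      Polynomial.degree_X_pow]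
    norm_cast
  have hQnatdeg : Q.natDegree = 4 := Polynomial.natDegree_eq_of_degree_eq_some hQdeg
  have hQG : Polynomial.aeval G Q = 0 := by
    rw [hQdef, map_add, map_add, map_pow, Polynomial.aeval_X, Polynomial.aeval_C, hTG]
    have e : G ^ 4 + (G + (G ^ 4 + G)) = (G ^ 4 + G) + (G ^ 4 + G) := by ring
    rw [e]
    exact CharTwo.add_self_eq_zero _
  have hint : IsIntegral (RatFunc F4) G := ⟨Q, hQmonic, hQG⟩
  have halg : IsAlgebraic (RatFunc F4) G := hint.isAlgebraic
  refine ⟨halg, ?_⟩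
  set m : Polynomial (RatFunc F4) := minpoly (RatFunc F4) G with hm
  have hmdvd : m ∣ Q := minpoly.dvd (RatFunc F4) G hQG
  have hmdeg_le : m.natDegree ≤ 4 := by
    have := Polynomial.natDegree_le_of_dvd hmdvd hQ0
    omega
  have hmdeg_pos : 0 < m.natDegree := minpoly.natDegree_pos hint
  -- roots of Q over (LaurentSeries F4)
  set γ : F4 → (LaurentSeries F4) := fun ch => algebraMap (RatFunc F4) (LaurentSeries F4) (RatFunc.C ch) with hγ
  have hγinj : Function.Injective γ := by
    intro x y hxy
    exact (RatFunc.C (K := F4)).injective ((algebraMap (RatFunc F4) (LaurentSeries F4)).injective hxy)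
  have hγ4 : ∀ ch, γ ch ^ 4 = γ ch := by
    intro ch
    rw [hγ]
    simp only
    rw [← map_pow, ← map_pow, F4_pow_four]
  have hsq : ∀ x y : LaurentSeries F4, (x + y) ^ 2 = x ^ 2 + y ^ 2 := fun x y =>
    add_pow_char x y 2
  have hpow4' : ∀ x y : (LaurentSeries F4), (x + y) ^ 4 = x ^ 4 + y ^ 4 := by
    intro x y
    have e : ∀ z : (LaurentSeries F4), z ^ 4 = (z ^ 2) ^ 2 := fun z => by ring
    rw [e, hsq, hsq, ← e, ← e]
  have hroot : ∀ ch : F4, Polynomial.aeval (G + γ ch) Q = 0 := by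
    intro ch
    rw [hQdef, map_add, map_add, map_pow, Polynomial.aeval_X, Polynomial.aeval_C, hTG,
      hpow4', hγ4]
    ring_nf
    rw [show (2 : (LaurentSeries F4)) = 0 from CharTwo.two_eq_zero]
    ring
  set QL : Polynomial (LaurentSeries F4) := Q.map (algebraMap (RatFunc F4) (LaurentSeries F4)) with hQL
  have hQL0 : QL ≠ 0 := (Polynomial.map_monic_ne_zero hQmonic)
  have hQLdeg : QL.natDegree = 4 := by
    rw [hQL, Polynomial.natDegree_map, hQnatdeg]
  have hrootL : ∀ ch : F4, QL.IsRoot (G + γ ch) := by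
    intro ch
    rw [Polynomial.IsRoot, hQL, Polynomial.eval_map, ← Polynomial.aeval_def]
    exact hroot ch
  set M0 : Multiset (LaurentSeries F4) := (Finset.univ : Finset F4).val.map (fun ch => G + γ ch) with hM0
  have hM0nodup : M0.Nodup := by
    apply Multiset.Nodup.map _ (Finset.univ.nodup)
    intro x y hxy
    exact hγinj (by exact add_left_cancel hxy)
  have hM0card : Multiset.card M0 = 4 := by
    rw [hM0, Multiset.card_map]
    exact F4_card
  have hM0le : M0 ≤ QL.roots := by
    rw [Multiset.le_iff_subset hM0nodup]
    intro x hx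
    rw [hM0, Multiset.mem_map] at hx
    obtain ⟨ch, _, rfl⟩ := hx
    rw [Polynomial.mem_roots hQL0]
    exact hrootL ch
  have hM0eq : M0 = QL.roots := by
    apply Multiset.eq_of_le_of_card_le hM0le
    rw [hM0card]
    have := QL.card_roots'
    omega
  have hQLsplits : QL.Splits := by
    rw [Polynomial.splits_iff_card_roots, ← hM0eq, hM0card, hQLdeg]
  set mL : Polynomial (LaurentSeries F4) := m.map (algebraMap (RatFunc F4) (LaurentSeries F4)) with hmL
  have hmLdvd : mL ∣ QL := Polynomial.map_dvd _ hmdvd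
  have hmLmonic : mL.Monic := (minpoly.monic hint).map _
  have hmLsplits : mL.Splits :=
    hQLsplits.of_dvd hQL0 hmLdvd
  have hmLroots_le : mL.roots ≤ QL.roots := Polynomial.roots.le_of_dvd hQL0 hmLdvd
  have hmLcard : Multiset.card mL.roots = m.natDegree := by
    rw [Polynomial.splits_iff_card_roots.mp hmLsplits, hmL, Polynomial.natDegree_map]
  set s : Multiset (LaurentSeries F4) := mL.roots with hs
  set Rng : Subring (LaurentSeries F4) := (algebraMap (RatFunc F4) (LaurentSeries F4)).range with hRng
  have hsum_mem : s.sum ∈ Rng := by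
    have h1 : mL.nextCoeff = -(s.sum) :=
      hmLsplits.nextCoeff_eq_neg_sum_roots_of_monic hmLmonic
    have h2 : mL.nextCoeff = algebraMap (RatFunc F4) (LaurentSeries F4) m.nextCoeff := by
      rw [hmL, Polynomial.nextCoeff_map (algebraMap (RatFunc F4) (LaurentSeries F4)).injective]
    have : s.sum = -(algebraMap (RatFunc F4) (LaurentSeries F4) m.nextCoeff) := by rw [← h2, h1, neg_neg]
    rw [this]
    exact Subring.neg_mem _ ⟨m.nextCoeff, rfl⟩
  have hshift_mem : (s.map (fun x => x + G)).sum ∈ Rng := by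
    apply Subring.multiset_sum_mem
    intro x hx
    rw [Multiset.mem_map] at hx
    obtain ⟨y, hy, rfl⟩ := hx
    have hyM0 : y ∈ M0 := by
      rw [hM0eq]
      exact Multiset.mem_of_le hmLroots_le hy
    rw [hM0, Multiset.mem_map] at hyM0
    obtain ⟨ch, _, rfl⟩ := hyM0
    have : G + γ ch + G = γ ch := by
      rw [add_comm G (γ ch), add_assoc]
      rw [CharTwo.add_self_eq_zero, add_zero]
    rw [this]
    exact ⟨RatFunc.C ch, rfl⟩
  have hshift : (s.map (fun x => x + G)).sum = s.sum + (Multiset.card s) • G := by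
    rw [Multiset.sum_map_add]
    congr 1
    · rw [Multiset.map_id']
    · rw [Multiset.map_const', Multiset.sum_replicate]
  have hsmul_mem : (Multiset.card s) • G ∈ Rng := by
    have : (Multiset.card s) • G = (s.map (fun x => x + G)).sum - s.sum := by
      rw [hshift]; ring
    rw [this]
    exact Subring.sub_mem _ hshift_mem hsum_mem
  -- if natDegree m is odd, then G would be rational
  have hnotodd : ¬ Odd m.natDegree := by
    intro hodd
    obtain ⟨k, hk⟩ := hodd
    have hcard : Multiset.card s = 2 * k + 1 := by rw [hmLcard, hk]
    have hGmem : G ∈ Rng := by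
      have h2G : (2 : ℕ) • G = 0 := by
        rw [two_smul]
        exact CharTwo.add_self_eq_zero G
      have : (Multiset.card s) • G = G := by
        rw [hcard, add_smul, one_smul, mul_comm 2 k, mul_smul, h2G]
        simp
      rwa [this] at hsmul_mem
    obtain ⟨r, hr⟩ := hGmem
    exact hGnot r hr
  rw [Nat.not_odd_iff_even, Nat.even_iff] at hnotodd
  omega
end
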